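/- arXiv:2503.14886 — 3 statements merged into one kernel-verified Lean document; each statement's English description precedes it below -/
import Mathlib

section
/- Under the change of coordinates given by the spherical projection z1 = |x|, z_i = x_i/(x1+|x|) (i=2,3), the Euclidean Laplacian of a smooth function phi on the hemispherical shell transforms as: Delta_x phi = d^2(phi~)/dz1^2 + ((1+|z'|^2)^2/(4 z1^2)) * (d^2(phi~)/dz2^2 + d^2(phi~)/dz3^2) + (2/z1) d(phi~)/dz1, where phi~(z) = phi(S^{-1}(z)). -/
noncomputable section

/-- Euclidean norm of a point of `ℝ × ℝ × ℝ`. -/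
def sphNorm (x : ℝ × ℝ × ℝ) : ℝ := Real.sqrt (x.1 ^ 2 + x.2.1 ^ 2 + x.2.2 ^ 2)

/-- The spherical projection coordinates `S`. -/
def sphProj (x : ℝ × ℝ × ℝ) : ℝ × ℝ × ℝ :=
  (sphNorm x, x.2.1 / (x.1 + sphNorm x), x.2.2 / (x.1 + sphNorm x))

/-- The inverse of the spherical projection coordinates. -/
def sphProjInv (z : ℝ × ℝ × ℝ) : ℝ × ℝ × ℝ :=
  (z.1 * (1 - (z.2.1 ^ 2 + z.2.2 ^ 2)) / (1 + (z.2.1 ^ 2 + z.2.2 ^ 2)),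
   2 * z.1 * z.2.1 / (1 + (z.2.1 ^ 2 + z.2.2 ^ 2)),
   2 * z.1 * z.2.2 / (1 + (z.2.1 ^ 2 + z.2.2 ^ 2)))

/-- Directional (partial) derivative of a function on `ℝ³`. -/
def pd (v : ℝ × ℝ × ℝ) (f : ℝ × ℝ × ℝ → ℝ) (p : ℝ × ℝ × ℝ) : ℝ := fderiv ℝ f p v

/-! ### Differentiability helpers -/

@[fun_prop]
theorem my_diffAt_div {E : Type*} [NormedAddCommGroup E] [NormedSpace ℝ E] {f g : E → ℝ} {z : E}
    (hf : DifferentiableAt ℝ f z) (hg : DifferentiableAt ℝ g z) (h : g z ≠ 0) :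
    DifferentiableAt ℝ (fun z => f z / g z) z := by
  simp only [div_eq_mul_inv]; exact hf.mul (hg.inv h)

def P1 (z : ℝ × ℝ × ℝ) : ℝ := z.1 * (1 - (z.2.1 ^ 2 + z.2.2 ^ 2)) / (1 + (z.2.1 ^ 2 + z.2.2 ^ 2))
def P2 (z : ℝ × ℝ × ℝ) : ℝ := 2 * z.1 * z.2.1 / (1 + (z.2.1 ^ 2 + z.2.2 ^ 2))
def P3 (z : ℝ × ℝ × ℝ) : ℝ := 2 * z.1 * z.2.2 / (1 + (z.2.1 ^ 2 + z.2.2 ^ 2))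

theorem diffP1 (z : ℝ × ℝ × ℝ) : DifferentiableAt ℝ P1 z := by
  unfold P1; fun_prop (disch := positivity)
theorem diffP2 (z : ℝ × ℝ × ℝ) : DifferentiableAt ℝ P2 z := by
  unfold P2; fun_prop (disch := positivity)
theorem diffP3 (z : ℝ × ℝ × ℝ) : DifferentiableAt ℝ P3 z := by
  unfold P3; fun_prop (disch := positivity)

theorem pd_eq1 {f : ℝ × ℝ × ℝ → ℝ} {z : ℝ × ℝ × ℝ} {d : ℝ} (hf : DifferentiableAt ℝ f z)
    (h : HasDerivAt (fun s => f (s, z.2.1, z.2.2)) d z.1) : pd (1, 0, 0) f z = d := by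
  have hc : HasDerivAt (fun s : ℝ => ((s, z.2.1, z.2.2) : ℝ × ℝ × ℝ)) (1, 0, 0) z.1 :=
    (hasDerivAt_id _).prodMk ((hasDerivAt_const _ _).prodMk (hasDerivAt_const _ _))
  have h2 : HasDerivAt (fun s : ℝ => f (s, z.2.1, z.2.2)) (fderiv ℝ f z (1, 0, 0)) z.1 :=
    hf.hasFDerivAt.comp_hasDerivAt z.1 hc
  exact h2.unique h

theorem pd_eq2 {f : ℝ × ℝ × ℝ → ℝ} {z : ℝ × ℝ × ℝ} {d : ℝ} (hf : DifferentiableAt ℝ f z)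
    (h : HasDerivAt (fun s => f (z.1, s, z.2.2)) d z.2.1) : pd (0, 1, 0) f z = d := by
  have hc : HasDerivAt (fun s : ℝ => ((z.1, s, z.2.2) : ℝ × ℝ × ℝ)) (0, 1, 0) z.2.1 :=
    (hasDerivAt_const _ _).prodMk ((hasDerivAt_id _).prodMk (hasDerivAt_const _ _))
  have h2 : HasDerivAt (fun s : ℝ => f (z.1, s, z.2.2)) (fderiv ℝ f z (0, 1, 0)) z.2.1 :=
    hf.hasFDerivAt.comp_hasDerivAt z.2.1 hc
  exact h2.unique h

theorem pd_eq3 {f : ℝ × ℝ × ℝ → ℝ} {z : ℝ × ℝ × ℝ} {d : ℝ} (hf : DifferentiableAt ℝ f z)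
    (h : HasDerivAt (fun s => f (z.1, z.2.1, s)) d z.2.2) : pd (0, 0, 1) f z = d := by
  have hc : HasDerivAt (fun s : ℝ => ((z.1, z.2.1, s) : ℝ × ℝ × ℝ)) (0, 0, 1) z.2.2 :=
    (hasDerivAt_const _ _).prodMk ((hasDerivAt_const _ _).prodMk (hasDerivAt_id _))
  have h2 : HasDerivAt (fun s : ℝ => f (z.1, z.2.1, s)) (fderiv ℝ f z (0, 0, 1)) z.2.2 :=
    hf.hasFDerivAt.comp_hasDerivAt z.2.2 hc
  exact h2.unique h

/-! ### First derivatives of the components of `sphProjInv` -/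

theorem pd1P1 (z : ℝ × ℝ × ℝ) :
    pd (1,0,0) P1 z = (1 - (z.2.1 ^ 2 + z.2.2 ^ 2)) / (1 + (z.2.1 ^ 2 + z.2.2 ^ 2)) := by
  apply pd_eq1 (diffP1 z)
  show HasDerivAt (fun s : ℝ => s * (1 - (z.2.1 ^ 2 + z.2.2 ^ 2)) / (1 + (z.2.1 ^ 2 + z.2.2 ^ 2))) _ _
  exact (((hasDerivAt_id z.1).mul_const _).div_const _).congr_deriv (by ring)

theorem pd1P2 (z : ℝ × ℝ × ℝ) :
    pd (1,0,0) P2 z = 2 * z.2.1 / (1 + (z.2.1 ^ 2 + z.2.2 ^ 2)) := by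
  apply pd_eq1 (diffP2 z)
  show HasDerivAt (fun s : ℝ => 2 * s * z.2.1 / (1 + (z.2.1 ^ 2 + z.2.2 ^ 2))) _ _
  exact ((((hasDerivAt_id z.1).const_mul 2).mul_const _).div_const _).congr_deriv (by ring)

theorem pd1P3 (z : ℝ × ℝ × ℝ) :
    pd (1,0,0) P3 z = 2 * z.2.2 / (1 + (z.2.1 ^ 2 + z.2.2 ^ 2)) := by
  apply pd_eq1 (diffP3 z)
  show HasDerivAt (fun s : ℝ => 2 * s * z.2.2 / (1 + (z.2.1 ^ 2 + z.2.2 ^ 2))) _ _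
  exact ((((hasDerivAt_id z.1).const_mul 2).mul_const _).div_const _).congr_deriv (by ring)

theorem pd2P1 (z : ℝ × ℝ × ℝ) :
    pd (0,1,0) P1 z = -4 * z.1 * z.2.1 / (1 + (z.2.1 ^ 2 + z.2.2 ^ 2)) ^ 2 := by
  apply pd_eq2 (diffP1 z)
  show HasDerivAt (fun s : ℝ => z.1 * (1 - (s ^ 2 + z.2.2 ^ 2)) / (1 + (s ^ 2 + z.2.2 ^ 2))) _ _
  have hnum : HasDerivAt (fun s : ℝ => z.1 * (1 - (s ^ 2 + z.2.2 ^ 2)))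
      (z.1 * -(2 * z.2.1)) z.2.1 :=
    (((hasDerivAt_pow 2 z.2.1).add_const (z.2.2 ^ 2)).const_sub 1).const_mul z.1
      |>.congr_deriv (by push_cast; ring)
  have hden : HasDerivAt (fun s : ℝ => 1 + (s ^ 2 + z.2.2 ^ 2)) (2 * z.2.1) z.2.1 :=
    (((hasDerivAt_pow 2 z.2.1).add_const (z.2.2 ^ 2)).const_add 1).congr_deriv (by push_cast; ring)
  have h0 : (1 : ℝ) + (z.2.1 ^ 2 + z.2.2 ^ 2) ≠ 0 := by positivity
  exact (hnum.div hden h0).congr_deriv (by field_simp; ring)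

theorem pd2P2 (z : ℝ × ℝ × ℝ) :
    pd (0,1,0) P2 z
      = 2 * z.1 * (1 - z.2.1 ^ 2 + z.2.2 ^ 2) / (1 + (z.2.1 ^ 2 + z.2.2 ^ 2)) ^ 2 := by
  apply pd_eq2 (diffP2 z)
  show HasDerivAt (fun s : ℝ => 2 * z.1 * s / (1 + (s ^ 2 + z.2.2 ^ 2))) _ _
  have hnum : HasDerivAt (fun s : ℝ => 2 * z.1 * s) (2 * z.1) z.2.1 :=
    ((hasDerivAt_id z.2.1).const_mul (2 * z.1)).congr_deriv (by ring)
  have hden : HasDerivAt (fun s : ℝ => 1 + (s ^ 2 + z.2.2 ^ 2)) (2 * z.2.1) z.2.1 :=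
    (((hasDerivAt_pow 2 z.2.1).add_const (z.2.2 ^ 2)).const_add 1).congr_deriv (by push_cast; ring)
  have h0 : (1 : ℝ) + (z.2.1 ^ 2 + z.2.2 ^ 2) ≠ 0 := by positivity
  exact (hnum.div hden h0).congr_deriv (by field_simp; ring)

theorem pd2P3 (z : ℝ × ℝ × ℝ) :
    pd (0,1,0) P3 z = -4 * z.1 * z.2.1 * z.2.2 / (1 + (z.2.1 ^ 2 + z.2.2 ^ 2)) ^ 2 := by
  apply pd_eq2 (diffP3 z)
  show HasDerivAt (fun s : ℝ => 2 * z.1 * z.2.2 / (1 + (s ^ 2 + z.2.2 ^ 2))) _ _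
  have hnum : HasDerivAt (fun _ : ℝ => 2 * z.1 * z.2.2) 0 z.2.1 := hasDerivAt_const _ _
  have hden : HasDerivAt (fun s : ℝ => 1 + (s ^ 2 + z.2.2 ^ 2)) (2 * z.2.1) z.2.1 :=
    (((hasDerivAt_pow 2 z.2.1).add_const (z.2.2 ^ 2)).const_add 1).congr_deriv (by push_cast; ring)
  have h0 : (1 : ℝ) + (z.2.1 ^ 2 + z.2.2 ^ 2) ≠ 0 := by positivity
  exact (hnum.div hden h0).congr_deriv (by field_simp; ring)

theorem pd3P1 (z : ℝ × ℝ × ℝ) :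
    pd (0,0,1) P1 z = -4 * z.1 * z.2.2 / (1 + (z.2.1 ^ 2 + z.2.2 ^ 2)) ^ 2 := by
  apply pd_eq3 (diffP1 z)
  show HasDerivAt (fun s : ℝ => z.1 * (1 - (z.2.1 ^ 2 + s ^ 2)) / (1 + (z.2.1 ^ 2 + s ^ 2))) _ _
  have hnum : HasDerivAt (fun s : ℝ => z.1 * (1 - (z.2.1 ^ 2 + s ^ 2)))
      (z.1 * -(2 * z.2.2)) z.2.2 :=
    (((hasDerivAt_pow 2 z.2.2).const_add (z.2.1 ^ 2)).const_sub 1).const_mul z.1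
      |>.congr_deriv (by push_cast; ring)
  have hden : HasDerivAt (fun s : ℝ => 1 + (z.2.1 ^ 2 + s ^ 2)) (2 * z.2.2) z.2.2 :=
    (((hasDerivAt_pow 2 z.2.2).const_add (z.2.1 ^ 2)).const_add 1).congr_deriv (by push_cast; ring)
  have h0 : (1 : ℝ) + (z.2.1 ^ 2 + z.2.2 ^ 2) ≠ 0 := by positivity
  exact (hnum.div hden h0).congr_deriv (by field_simp; ring)

theorem pd3P2 (z : ℝ × ℝ × ℝ) :
    pd (0,0,1) P2 z = -4 * z.1 * z.2.1 * z.2.2 / (1 + (z.2.1 ^ 2 + z.2.2 ^ 2)) ^ 2 := by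
  apply pd_eq3 (diffP2 z)
  show HasDerivAt (fun s : ℝ => 2 * z.1 * z.2.1 / (1 + (z.2.1 ^ 2 + s ^ 2))) _ _
  have hnum : HasDerivAt (fun _ : ℝ => 2 * z.1 * z.2.1) 0 z.2.2 := hasDerivAt_const _ _
  have hden : HasDerivAt (fun s : ℝ => 1 + (z.2.1 ^ 2 + s ^ 2)) (2 * z.2.2) z.2.2 :=
    (((hasDerivAt_pow 2 z.2.2).const_add (z.2.1 ^ 2)).const_add 1).congr_deriv (by push_cast; ring)
  have h0 : (1 : ℝ) + (z.2.1 ^ 2 + z.2.2 ^ 2) ≠ 0 := by positivity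
  exact (hnum.div hden h0).congr_deriv (by field_simp; ring)

theorem pd3P3 (z : ℝ × ℝ × ℝ) :
    pd (0,0,1) P3 z
      = 2 * z.1 * (1 + z.2.1 ^ 2 - z.2.2 ^ 2) / (1 + (z.2.1 ^ 2 + z.2.2 ^ 2)) ^ 2 := by
  apply pd_eq3 (diffP3 z)
  show HasDerivAt (fun s : ℝ => 2 * z.1 * s / (1 + (z.2.1 ^ 2 + s ^ 2))) _ _
  have hnum : HasDerivAt (fun s : ℝ => 2 * z.1 * s) (2 * z.1) z.2.2 :=
    ((hasDerivAt_id z.2.2).const_mul (2 * z.1)).congr_deriv (by ring)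
  have hden : HasDerivAt (fun s : ℝ => 1 + (z.2.1 ^ 2 + s ^ 2)) (2 * z.2.2) z.2.2 :=
    (((hasDerivAt_pow 2 z.2.2).const_add (z.2.1 ^ 2)).const_add 1).congr_deriv (by push_cast; ring)
  have h0 : (1 : ℝ) + (z.2.1 ^ 2 + z.2.2 ^ 2) ≠ 0 := by positivity
  exact (hnum.div hden h0).congr_deriv (by field_simp; ring)
/-! ### Second derivatives -/

theorem pd1A1 (z : ℝ × ℝ × ℝ) :
    pd (1,0,0) (fun z : ℝ×ℝ×ℝ => (1 - (z.2.1 ^ 2 + z.2.2 ^ 2)) / (1 + (z.2.1 ^ 2 + z.2.2 ^ 2))) z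
      = 0 := by
  have hd : DifferentiableAt ℝ
      (fun z : ℝ×ℝ×ℝ => (1 - (z.2.1 ^ 2 + z.2.2 ^ 2)) / (1 + (z.2.1 ^ 2 + z.2.2 ^ 2))) z := by
    fun_prop (disch := positivity)
  refine pd_eq1 hd ?_
  show HasDerivAt (fun _ : ℝ => (1 - (z.2.1 ^ 2 + z.2.2 ^ 2)) / (1 + (z.2.1 ^ 2 + z.2.2 ^ 2))) _ _
  exact hasDerivAt_const _ _

theorem pd1A2 (z : ℝ × ℝ × ℝ) :
    pd (1,0,0) (fun z : ℝ×ℝ×ℝ => 2 * z.2.1 / (1 + (z.2.1 ^ 2 + z.2.2 ^ 2))) z = 0 := by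
  have hd : DifferentiableAt ℝ
      (fun z : ℝ×ℝ×ℝ => 2 * z.2.1 / (1 + (z.2.1 ^ 2 + z.2.2 ^ 2))) z := by
    fun_prop (disch := positivity)
  refine pd_eq1 hd ?_
  show HasDerivAt (fun _ : ℝ => 2 * z.2.1 / (1 + (z.2.1 ^ 2 + z.2.2 ^ 2))) _ _
  exact hasDerivAt_const _ _

theorem pd1A3 (z : ℝ × ℝ × ℝ) :
    pd (1,0,0) (fun z : ℝ×ℝ×ℝ => 2 * z.2.2 / (1 + (z.2.1 ^ 2 + z.2.2 ^ 2))) z = 0 := by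
  have hd : DifferentiableAt ℝ
      (fun z : ℝ×ℝ×ℝ => 2 * z.2.2 / (1 + (z.2.1 ^ 2 + z.2.2 ^ 2))) z := by
    fun_prop (disch := positivity)
  refine pd_eq1 hd ?_
  show HasDerivAt (fun _ : ℝ => 2 * z.2.2 / (1 + (z.2.1 ^ 2 + z.2.2 ^ 2))) _ _
  exact hasDerivAt_const _ _

theorem pd2B1 (z : ℝ × ℝ × ℝ) :
    pd (0,1,0) (fun z : ℝ×ℝ×ℝ => -4 * z.1 * z.2.1 / (1 + (z.2.1 ^ 2 + z.2.2 ^ 2)) ^ 2) z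
      = -4 * z.1 * (1 - 3 * z.2.1 ^ 2 + z.2.2 ^ 2) / (1 + (z.2.1 ^ 2 + z.2.2 ^ 2)) ^ 3 := by
  apply pd_eq2 (by fun_prop (disch := positivity))
  show HasDerivAt (fun s : ℝ => -4 * z.1 * s / (1 + (s ^ 2 + z.2.2 ^ 2)) ^ 2) _ _
  have hnum : HasDerivAt (fun s : ℝ => -4 * z.1 * s) (-4 * z.1) z.2.1 :=
    ((hasDerivAt_id z.2.1).const_mul (-4 * z.1)).congr_deriv (by ring)
  have hQ : HasDerivAt (fun s : ℝ => 1 + (s ^ 2 + z.2.2 ^ 2)) (2 * z.2.1) z.2.1 :=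
    (((hasDerivAt_pow 2 z.2.1).add_const (z.2.2 ^ 2)).const_add 1).congr_deriv (by push_cast; ring)
  have hden : HasDerivAt (fun s : ℝ => (1 + (s ^ 2 + z.2.2 ^ 2)) ^ 2)
      (2 * (1 + (z.2.1 ^ 2 + z.2.2 ^ 2)) * (2 * z.2.1)) z.2.1 :=
    (hQ.pow 2).congr_deriv (by push_cast; ring)
  have h0 : (1 : ℝ) + (z.2.1 ^ 2 + z.2.2 ^ 2) ≠ 0 := by positivity
  have h0' : ((1 : ℝ) + (z.2.1 ^ 2 + z.2.2 ^ 2)) ^ 2 ≠ 0 := by positivity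
  exact (hnum.div hden h0').congr_deriv (by field_simp; ring)

theorem pd2B2 (z : ℝ × ℝ × ℝ) :
    pd (0,1,0) (fun z : ℝ×ℝ×ℝ =>
        2 * z.1 * (1 - z.2.1 ^ 2 + z.2.2 ^ 2) / (1 + (z.2.1 ^ 2 + z.2.2 ^ 2)) ^ 2) z
      = -4 * z.1 * z.2.1 * (3 - z.2.1 ^ 2 + 3 * z.2.2 ^ 2)
          / (1 + (z.2.1 ^ 2 + z.2.2 ^ 2)) ^ 3 := by
  apply pd_eq2 (by fun_prop (disch := positivity))
  show HasDerivAt (fun s : ℝ => 2 * z.1 * (1 - s ^ 2 + z.2.2 ^ 2) / (1 + (s ^ 2 + z.2.2 ^ 2)) ^ 2) _ _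
  have hnum : HasDerivAt (fun s : ℝ => 2 * z.1 * (1 - s ^ 2 + z.2.2 ^ 2))
      (2 * z.1 * -(2 * z.2.1)) z.2.1 :=
    ((((hasDerivAt_pow 2 z.2.1).const_sub 1).add_const (z.2.2 ^ 2)).const_mul (2 * z.1)).congr_deriv
      (by push_cast; ring)
  have hQ : HasDerivAt (fun s : ℝ => 1 + (s ^ 2 + z.2.2 ^ 2)) (2 * z.2.1) z.2.1 :=
    (((hasDerivAt_pow 2 z.2.1).add_const (z.2.2 ^ 2)).const_add 1).congr_deriv (by push_cast; ring)
  have hden : HasDerivAt (fun s : ℝ => (1 + (s ^ 2 + z.2.2 ^ 2)) ^ 2)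
      (2 * (1 + (z.2.1 ^ 2 + z.2.2 ^ 2)) * (2 * z.2.1)) z.2.1 :=
    (hQ.pow 2).congr_deriv (by push_cast; ring)
  have h0 : (1 : ℝ) + (z.2.1 ^ 2 + z.2.2 ^ 2) ≠ 0 := by positivity
  have h0' : ((1 : ℝ) + (z.2.1 ^ 2 + z.2.2 ^ 2)) ^ 2 ≠ 0 := by positivity
  exact (hnum.div hden h0').congr_deriv (by field_simp; ring)

theorem pd2B3 (z : ℝ × ℝ × ℝ) :
    pd (0,1,0) (fun z : ℝ×ℝ×ℝ =>
        -4 * z.1 * z.2.1 * z.2.2 / (1 + (z.2.1 ^ 2 + z.2.2 ^ 2)) ^ 2) z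
      = -4 * z.1 * z.2.2 * (1 - 3 * z.2.1 ^ 2 + z.2.2 ^ 2)
          / (1 + (z.2.1 ^ 2 + z.2.2 ^ 2)) ^ 3 := by
  apply pd_eq2 (by fun_prop (disch := positivity))
  show HasDerivAt (fun s : ℝ => -4 * z.1 * s * z.2.2 / (1 + (s ^ 2 + z.2.2 ^ 2)) ^ 2) _ _
  have hnum : HasDerivAt (fun s : ℝ => -4 * z.1 * s * z.2.2) (-4 * z.1 * z.2.2) z.2.1 :=
    (((hasDerivAt_id z.2.1).const_mul (-4 * z.1)).mul_const z.2.2).congr_deriv (by ring)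
  have hQ : HasDerivAt (fun s : ℝ => 1 + (s ^ 2 + z.2.2 ^ 2)) (2 * z.2.1) z.2.1 :=
    (((hasDerivAt_pow 2 z.2.1).add_const (z.2.2 ^ 2)).const_add 1).congr_deriv (by push_cast; ring)
  have hden : HasDerivAt (fun s : ℝ => (1 + (s ^ 2 + z.2.2 ^ 2)) ^ 2)
      (2 * (1 + (z.2.1 ^ 2 + z.2.2 ^ 2)) * (2 * z.2.1)) z.2.1 :=
    (hQ.pow 2).congr_deriv (by push_cast; ring)
  have h0 : (1 : ℝ) + (z.2.1 ^ 2 + z.2.2 ^ 2) ≠ 0 := by positivity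
  have h0' : ((1 : ℝ) + (z.2.1 ^ 2 + z.2.2 ^ 2)) ^ 2 ≠ 0 := by positivity
  exact (hnum.div hden h0').congr_deriv (by field_simp; ring)

theorem pd3C1 (z : ℝ × ℝ × ℝ) :
    pd (0,0,1) (fun z : ℝ×ℝ×ℝ => -4 * z.1 * z.2.2 / (1 + (z.2.1 ^ 2 + z.2.2 ^ 2)) ^ 2) z
      = -4 * z.1 * (1 + z.2.1 ^ 2 - 3 * z.2.2 ^ 2) / (1 + (z.2.1 ^ 2 + z.2.2 ^ 2)) ^ 3 := by
  apply pd_eq3 (by fun_prop (disch := positivity))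
  show HasDerivAt (fun s : ℝ => -4 * z.1 * s / (1 + (z.2.1 ^ 2 + s ^ 2)) ^ 2) _ _
  have hnum : HasDerivAt (fun s : ℝ => -4 * z.1 * s) (-4 * z.1) z.2.2 :=
    ((hasDerivAt_id z.2.2).const_mul (-4 * z.1)).congr_deriv (by ring)
  have hQ : HasDerivAt (fun s : ℝ => 1 + (z.2.1 ^ 2 + s ^ 2)) (2 * z.2.2) z.2.2 :=
    (((hasDerivAt_pow 2 z.2.2).const_add (z.2.1 ^ 2)).const_add 1).congr_deriv (by push_cast; ring)
  have hden : HasDerivAt (fun s : ℝ => (1 + (z.2.1 ^ 2 + s ^ 2)) ^ 2)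
      (2 * (1 + (z.2.1 ^ 2 + z.2.2 ^ 2)) * (2 * z.2.2)) z.2.2 :=
    (hQ.pow 2).congr_deriv (by push_cast; ring)
  have h0 : (1 : ℝ) + (z.2.1 ^ 2 + z.2.2 ^ 2) ≠ 0 := by positivity
  have h0' : ((1 : ℝ) + (z.2.1 ^ 2 + z.2.2 ^ 2)) ^ 2 ≠ 0 := by positivity
  exact (hnum.div hden h0').congr_deriv (by field_simp; ring)

theorem pd3B3 (z : ℝ × ℝ × ℝ) :
    pd (0,0,1) (fun z : ℝ×ℝ×ℝ =>
        -4 * z.1 * z.2.1 * z.2.2 / (1 + (z.2.1 ^ 2 + z.2.2 ^ 2)) ^ 2) z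
      = -4 * z.1 * z.2.1 * (1 + z.2.1 ^ 2 - 3 * z.2.2 ^ 2)
          / (1 + (z.2.1 ^ 2 + z.2.2 ^ 2)) ^ 3 := by
  apply pd_eq3 (by fun_prop (disch := positivity))
  show HasDerivAt (fun s : ℝ => -4 * z.1 * z.2.1 * s / (1 + (z.2.1 ^ 2 + s ^ 2)) ^ 2) _ _
  have hnum : HasDerivAt (fun s : ℝ => -4 * z.1 * z.2.1 * s) (-4 * z.1 * z.2.1) z.2.2 :=
    ((hasDerivAt_id z.2.2).const_mul (-4 * z.1 * z.2.1)).congr_deriv (by ring)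
  have hQ : HasDerivAt (fun s : ℝ => 1 + (z.2.1 ^ 2 + s ^ 2)) (2 * z.2.2) z.2.2 :=
    (((hasDerivAt_pow 2 z.2.2).const_add (z.2.1 ^ 2)).const_add 1).congr_deriv (by push_cast; ring)
  have hden : HasDerivAt (fun s : ℝ => (1 + (z.2.1 ^ 2 + s ^ 2)) ^ 2)
      (2 * (1 + (z.2.1 ^ 2 + z.2.2 ^ 2)) * (2 * z.2.2)) z.2.2 :=
    (hQ.pow 2).congr_deriv (by push_cast; ring)
  have h0 : (1 : ℝ) + (z.2.1 ^ 2 + z.2.2 ^ 2) ≠ 0 := by positivity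
  have h0' : ((1 : ℝ) + (z.2.1 ^ 2 + z.2.2 ^ 2)) ^ 2 ≠ 0 := by positivity
  exact (hnum.div hden h0').congr_deriv (by field_simp; ring)

theorem pd3C3 (z : ℝ × ℝ × ℝ) :
    pd (0,0,1) (fun z : ℝ×ℝ×ℝ =>
        2 * z.1 * (1 + z.2.1 ^ 2 - z.2.2 ^ 2) / (1 + (z.2.1 ^ 2 + z.2.2 ^ 2)) ^ 2) z
      = -4 * z.1 * z.2.2 * (3 + 3 * z.2.1 ^ 2 - z.2.2 ^ 2)
          / (1 + (z.2.1 ^ 2 + z.2.2 ^ 2)) ^ 3 := by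
  apply pd_eq3 (by fun_prop (disch := positivity))
  show HasDerivAt (fun s : ℝ => 2 * z.1 * (1 + z.2.1 ^ 2 - s ^ 2) / (1 + (z.2.1 ^ 2 + s ^ 2)) ^ 2) _ _
  have hnum : HasDerivAt (fun s : ℝ => 2 * z.1 * (1 + z.2.1 ^ 2 - s ^ 2))
      (2 * z.1 * -(2 * z.2.2)) z.2.2 :=
    (((hasDerivAt_pow 2 z.2.2).const_sub (1 + z.2.1 ^ 2)).const_mul (2 * z.1)).congr_deriv
      (by push_cast; ring)
  have hQ : HasDerivAt (fun s : ℝ => 1 + (z.2.1 ^ 2 + s ^ 2)) (2 * z.2.2) z.2.2 :=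
    (((hasDerivAt_pow 2 z.2.2).const_add (z.2.1 ^ 2)).const_add 1).congr_deriv (by push_cast; ring)
  have hden : HasDerivAt (fun s : ℝ => (1 + (z.2.1 ^ 2 + s ^ 2)) ^ 2)
      (2 * (1 + (z.2.1 ^ 2 + z.2.2 ^ 2)) * (2 * z.2.2)) z.2.2 :=
    (hQ.pow 2).congr_deriv (by push_cast; ring)
  have h0 : (1 : ℝ) + (z.2.1 ^ 2 + z.2.2 ^ 2) ≠ 0 := by positivity
  have h0' : ((1 : ℝ) + (z.2.1 ^ 2 + z.2.2 ^ 2)) ^ 2 ≠ 0 := by positivity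
  exact (hnum.div hden h0').congr_deriv (by field_simp; ring)
/-! ### Structural lemmas for `pd` -/

theorem diffSphProjInv (z : ℝ × ℝ × ℝ) : DifferentiableAt ℝ sphProjInv z :=
  (diffP1 z).prodMk ((diffP2 z).prodMk (diffP3 z))

theorem pd_congr {f g : ℝ × ℝ × ℝ → ℝ} {z v : ℝ × ℝ × ℝ} (h : f =ᶠ[nhds z] g) :
    pd v f z = pd v g z := by
  unfold pd; rw [Filter.EventuallyEq.fderiv_eq h]

theorem pd_add {f g : ℝ × ℝ × ℝ → ℝ} {z v : ℝ × ℝ × ℝ} (hf : DifferentiableAt ℝ f z)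
    (hg : DifferentiableAt ℝ g z) :
    pd v (fun y => f y + g y) z = pd v f z + pd v g z := by
  unfold pd; rw [fderiv_fun_add hf hg]; simp

theorem pd_mul {f g : ℝ × ℝ × ℝ → ℝ} {z v : ℝ × ℝ × ℝ} (hf : DifferentiableAt ℝ f z)
    (hg : DifferentiableAt ℝ g z) :
    pd v (fun y => f y * g y) z = pd v f z * g z + f z * pd v g z := by
  unfold pd; rw [fderiv_fun_mul hf hg]; simp [smul_eq_mul]; ring

theorem pd_comp (g : ℝ × ℝ × ℝ → ℝ) (v z : ℝ × ℝ × ℝ)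
    (hg : DifferentiableAt ℝ g (sphProjInv z)) :
    pd v (fun y => g (sphProjInv y)) z =
      pd v P1 z * pd (1,0,0) g (sphProjInv z) + pd v P2 z * pd (0,1,0) g (sphProjInv z)
        + pd v P3 z * pd (0,0,1) g (sphProjInv z) := by
  have hS : HasFDerivAt sphProjInv
      ((fderiv ℝ P1 z).prod ((fderiv ℝ P2 z).prod (fderiv ℝ P3 z))) z :=
    (diffP1 z).hasFDerivAt.prodMk ((diffP2 z).hasFDerivAt.prodMk (diffP3 z).hasFDerivAt)
  have hc : HasFDerivAt (fun y => g (sphProjInv y))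
      ((fderiv ℝ g (sphProjInv z)).comp
        ((fderiv ℝ P1 z).prod ((fderiv ℝ P2 z).prod (fderiv ℝ P3 z)))) z :=
    hg.hasFDerivAt.comp z hS
  have e0 : pd v (fun y => g (sphProjInv y)) z
      = fderiv ℝ g (sphProjInv z) (pd v P1 z, pd v P2 z, pd v P3 z) := by
    unfold pd; rw [hc.fderiv]; rfl
  rw [e0]
  have hw : ((pd v P1 z, pd v P2 z, pd v P3 z) : ℝ × ℝ × ℝ)
      = pd v P1 z • ((1:ℝ),(0:ℝ),(0:ℝ)) + pd v P2 z • ((0:ℝ),(1:ℝ),(0:ℝ))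
          + pd v P3 z • ((0:ℝ),(0:ℝ),(1:ℝ)) := by
    simp [Prod.ext_iff]
  rw [hw, map_add, map_add, map_smul, map_smul, map_smul]
  simp [pd, smul_eq_mul]

/-! ### Facts about the projection -/

theorem sphNorm_sq (x : ℝ × ℝ × ℝ) : sphNorm x ^ 2 = x.1 ^ 2 + x.2.1 ^ 2 + x.2.2 ^ 2 :=
  Real.sq_sqrt (by positivity)

theorem continuous_sphNorm : Continuous sphNorm := by
  unfold sphNorm; exact Real.continuous_sqrt.comp (by fun_prop)

theorem isOpenU (r1 r2 : ℝ) :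
    IsOpen {x : ℝ × ℝ × ℝ | 0 < x.1 ∧ r1 < sphNorm x ∧ sphNorm x < r2} :=
  (isOpen_lt continuous_const continuous_fst).inter
    ((isOpen_lt continuous_const continuous_sphNorm).inter
      (isOpen_lt continuous_sphNorm continuous_const))

theorem sphProjInv_sphProj {x : ℝ × ℝ × ℝ} (hx1 : 0 < x.1) (hn : 0 < sphNorm x) :
    sphProjInv (sphProj x) = x := by
  have hs : x.1 + sphNorm x ≠ 0 := by positivity
  have hn' : sphNorm x ≠ 0 := ne_of_gt hn
  have hn2 : sphNorm x ^ 2 = x.1 ^ 2 + x.2.1 ^ 2 + x.2.2 ^ 2 := sphNorm_sq x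
  have key : (x.2.1 / (x.1 + sphNorm x)) ^ 2 + (x.2.2 / (x.1 + sphNorm x)) ^ 2
      = (sphNorm x - x.1) / (x.1 + sphNorm x) := by
    field_simp
    linear_combination -hn2
  have h2n : (1 : ℝ) + ((x.2.1 / (x.1 + sphNorm x)) ^ 2 + (x.2.2 / (x.1 + sphNorm x)) ^ 2)
      = 2 * sphNorm x / (x.1 + sphNorm x) := by
    rw [key]; field_simp; ring
  have h1n : (1 : ℝ) - ((x.2.1 / (x.1 + sphNorm x)) ^ 2 + (x.2.2 / (x.1 + sphNorm x)) ^ 2)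
      = 2 * x.1 / (x.1 + sphNorm x) := by
    rw [key]; field_simp; ring
  simp only [sphProjInv, sphProj, Prod.ext_iff]
  refine ⟨?_, ?_, ?_⟩ <;> rw [h2n] <;> [rw [h1n]; skip; skip] <;> field_simp <;> ring

theorem pd_expand {c1 c2 c3 G1 G2 G3 : ℝ × ℝ × ℝ → ℝ} {v z : ℝ × ℝ × ℝ}
    (h1 : DifferentiableAt ℝ c1 z) (h2 : DifferentiableAt ℝ c2 z) (h3 : DifferentiableAt ℝ c3 z)
    (hG1 : DifferentiableAt ℝ G1 z) (hG2 : DifferentiableAt ℝ G2 z)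
    (hG3 : DifferentiableAt ℝ G3 z) :
    pd v (fun y => c1 y * G1 y + c2 y * G2 y + c3 y * G3 y) z
      = pd v c1 z * G1 z + c1 z * pd v G1 z + (pd v c2 z * G2 z + c2 z * pd v G2 z)
        + (pd v c3 z * G3 z + c3 z * pd v G3 z) := by
  have A := pd_add (v := v) (f := fun y => c1 y * G1 y + c2 y * G2 y) (g := fun y => c3 y * G3 y) ((h1.mul hG1).add (h2.mul hG2)) (h3.mul hG3)
  have B := pd_add (v := v) (f := fun y => c1 y * G1 y) (g := fun y => c2 y * G2 y) (h1.mul hG1) (h2.mul hG2)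
  have C1 := pd_mul (v := v) h1 hG1
  have C2 := pd_mul (v := v) h2 hG2
  have C3 := pd_mul (v := v) h3 hG3
  exact A.trans (by rw [B, C1, C2, C3])

set_option maxHeartbeats 4000000

/-- the Euclidean Laplacian transforms under the spherical projection
coordinates into `∂²_{z1} + ((1+|z'|²)²/(4z1²)) (∂²_{z2} + ∂²_{z3}) + (2/z1) ∂_{z1}`. -/
theorem laplacian_in_spherical_projection_coordinates (r1 r2 : ℝ)
    (hr1 : 0 < r1) (hr12 : r1 < r2) (φ : ℝ × ℝ × ℝ → ℝ)
    (hφ : ContDiffOn ℝ 2 φ {x | 0 < x.1 ∧ r1 < sphNorm x ∧ sphNorm x < r2}) :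
    ∀ x ∈ {x : ℝ × ℝ × ℝ | 0 < x.1 ∧ r1 < sphNorm x ∧ sphNorm x < r2},
      pd (1, 0, 0) (pd (1, 0, 0) φ) x + pd (0, 1, 0) (pd (0, 1, 0) φ) x
          + pd (0, 0, 1) (pd (0, 0, 1) φ) x
        = pd (1, 0, 0) (pd (1, 0, 0) (φ ∘ sphProjInv)) (sphProj x)
            + ((1 + ((sphProj x).2.1 ^ 2 + (sphProj x).2.2 ^ 2)) ^ 2
                / (4 * (sphProj x).1 ^ 2)) *
              (pd (0, 1, 0) (pd (0, 1, 0) (φ ∘ sphProjInv)) (sphProj x)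
                + pd (0, 0, 1) (pd (0, 0, 1) (φ ∘ sphProjInv)) (sphProj x))
            + (2 / (sphProj x).1) * pd (1, 0, 0) (φ ∘ sphProjInv) (sphProj x) := by
  intro x hx
  obtain ⟨hx1, hxr1, hxr2⟩ := hx
  have hn0 : 0 < sphNorm x := lt_trans hr1 hxr1
  have hinv : sphProjInv (sphProj x) = x := sphProjInv_sphProj hx1 hn0
  have hU : IsOpen {x : ℝ × ℝ × ℝ | 0 < x.1 ∧ r1 < sphNorm x ∧ sphNorm x < r2} := isOpenU r1 r2
  have hxU : x ∈ {x : ℝ × ℝ × ℝ | 0 < x.1 ∧ r1 < sphNorm x ∧ sphNorm x < r2} :=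
    ⟨hx1, hxr1, hxr2⟩
  have hUnhds := hU.mem_nhds hxU
  have hdiffOn : ∀ y ∈ {x : ℝ × ℝ × ℝ | 0 < x.1 ∧ r1 < sphNorm x ∧ sphNorm x < r2},
      DifferentiableAt ℝ φ y :=
    fun y hy => (hφ.contDiffAt (hU.mem_nhds hy)).differentiableAt two_ne_zero
  have hφ2 : ContDiffAt ℝ 2 φ x := hφ.contDiffAt hUnhds
  have hfd : DifferentiableAt ℝ (fderiv ℝ φ) x :=
    (hφ2.fderiv_right (m := 1) (by norm_num)).differentiableAt one_ne_zero
  have hg1 : DifferentiableAt ℝ (pd (1,0,0) φ) x := hfd.clm_apply (differentiableAt_const _)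
  have hg2 : DifferentiableAt ℝ (pd (0,1,0) φ) x := hfd.clm_apply (differentiableAt_const _)
  have hg3 : DifferentiableAt ℝ (pd (0,0,1) φ) x := hfd.clm_apply (differentiableAt_const _)
  have hsymm : ∀ v w : ℝ × ℝ × ℝ,
      fderiv ℝ (fderiv ℝ φ) x v w = fderiv ℝ (fderiv ℝ φ) x w v := fun v w =>
    second_derivative_symmetric_of_eventually
      (Filter.eventually_of_mem hUnhds fun y hy => (hdiffOn y hy).hasFDerivAt)
      hfd.hasFDerivAt v w
  have hkey : ∀ v w : ℝ × ℝ × ℝ, pd w (pd v φ) x = fderiv ℝ (fderiv ℝ φ) x w v := by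
    intro v w
    have h0 : pd w (pd v φ) x = fderiv ℝ (fun p => fderiv ℝ φ p v) x w := rfl
    rw [h0, fderiv_clm_apply hfd (differentiableAt_const v)]
    simp
  have hWev : ∀ᶠ y in nhds (sphProj x),
      sphProjInv y ∈ {x : ℝ × ℝ × ℝ | 0 < x.1 ∧ r1 < sphNorm x ∧ sphNorm x < r2} :=
    (diffSphProjInv (sphProj x)).continuousAt.preimage_mem_nhds (by rw [hinv]; exact hUnhds)
  have hφz : DifferentiableAt ℝ φ (sphProjInv (sphProj x)) := by
    rw [hinv]; exact hdiffOn x hxU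
  have hgz1 : DifferentiableAt ℝ (pd (1,0,0) φ) (sphProjInv (sphProj x)) := by
    rw [hinv]; exact hg1
  have hgz2 : DifferentiableAt ℝ (pd (0,1,0) φ) (sphProjInv (sphProj x)) := by
    rw [hinv]; exact hg2
  have hgz3 : DifferentiableAt ℝ (pd (0,0,1) φ) (sphProjInv (sphProj x)) := by
    rw [hinv]; exact hg3
  have hG1 : DifferentiableAt ℝ (fun y => pd (1,0,0) φ (sphProjInv y)) (sphProj x) :=
    hgz1.comp _ (diffSphProjInv _)
  have hG2 : DifferentiableAt ℝ (fun y => pd (0,1,0) φ (sphProjInv y)) (sphProj x) :=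
    hgz2.comp _ (diffSphProjInv _)
  have hG3 : DifferentiableAt ℝ (fun y => pd (0,0,1) φ (sphProjInv y)) (sphProj x) :=
    hgz3.comp _ (diffSphProjInv _)
  -- first order term
  have hfirst : pd (1,0,0) (fun y => φ (sphProjInv y)) (sphProj x)
      = (1 - ((sphProj x).2.1 ^ 2 + (sphProj x).2.2 ^ 2))
            / (1 + ((sphProj x).2.1 ^ 2 + (sphProj x).2.2 ^ 2)) * pd (1,0,0) φ x
        + 2 * (sphProj x).2.1 / (1 + ((sphProj x).2.1 ^ 2 + (sphProj x).2.2 ^ 2))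
            * pd (0,1,0) φ x
        + 2 * (sphProj x).2.2 / (1 + ((sphProj x).2.1 ^ 2 + (sphProj x).2.2 ^ 2))
            * pd (0,0,1) φ x := by
    rw [pd_comp φ _ _ hφz, pd1P1, pd1P2, pd1P3, hinv]
  -- second order, direction (1,0,0)
  have hev1 : pd (1,0,0) (fun y => φ (sphProjInv y)) =ᶠ[nhds (sphProj x)] (fun y =>
      (1 - (y.2.1 ^ 2 + y.2.2 ^ 2)) / (1 + (y.2.1 ^ 2 + y.2.2 ^ 2))
          * pd (1,0,0) φ (sphProjInv y)
        + 2 * y.2.1 / (1 + (y.2.1 ^ 2 + y.2.2 ^ 2)) * pd (0,1,0) φ (sphProjInv y)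
        + 2 * y.2.2 / (1 + (y.2.1 ^ 2 + y.2.2 ^ 2)) * pd (0,0,1) φ (sphProjInv y)) := by
    filter_upwards [hWev] with y hy
    rw [pd_comp φ _ _ (hdiffOn _ hy), pd1P1, pd1P2, pd1P3]
  have e11 := pd_expand (v := (1,0,0)) (z := sphProj x)
      (c1 := fun y : ℝ×ℝ×ℝ => (1 - (y.2.1 ^ 2 + y.2.2 ^ 2)) / (1 + (y.2.1 ^ 2 + y.2.2 ^ 2)))
      (c2 := fun y : ℝ×ℝ×ℝ => 2 * y.2.1 / (1 + (y.2.1 ^ 2 + y.2.2 ^ 2)))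
      (c3 := fun y : ℝ×ℝ×ℝ => 2 * y.2.2 / (1 + (y.2.1 ^ 2 + y.2.2 ^ 2)))
      (G1 := fun y => pd (1,0,0) φ (sphProjInv y))
      (G2 := fun y => pd (0,1,0) φ (sphProjInv y))
      (G3 := fun y => pd (0,0,1) φ (sphProjInv y))
      (by fun_prop (disch := positivity)) (by fun_prop (disch := positivity))
      (by fun_prop (disch := positivity)) hG1 hG2 hG3
  rw [pd1A1, pd1A2, pd1A3,
      pd_comp (pd (1,0,0) φ) (1,0,0) (sphProj x) hgz1,
      pd_comp (pd (0,1,0) φ) (1,0,0) (sphProj x) hgz2,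
      pd_comp (pd (0,0,1) φ) (1,0,0) (sphProj x) hgz3,
      pd1P1, pd1P2, pd1P3, hinv] at e11
  simp only [hinv, hkey] at e11
  have hψ11 := (pd_congr (v := (1,0,0)) hev1).trans e11
  -- second order, direction (0,1,0)
  have hev2 : pd (0,1,0) (fun y => φ (sphProjInv y)) =ᶠ[nhds (sphProj x)] (fun y =>
      -4 * y.1 * y.2.1 / (1 + (y.2.1 ^ 2 + y.2.2 ^ 2)) ^ 2 * pd (1,0,0) φ (sphProjInv y)
        + 2 * y.1 * (1 - y.2.1 ^ 2 + y.2.2 ^ 2) / (1 + (y.2.1 ^ 2 + y.2.2 ^ 2)) ^ 2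
            * pd (0,1,0) φ (sphProjInv y)
        + -4 * y.1 * y.2.1 * y.2.2 / (1 + (y.2.1 ^ 2 + y.2.2 ^ 2)) ^ 2
            * pd (0,0,1) φ (sphProjInv y)) := by
    filter_upwards [hWev] with y hy
    rw [pd_comp φ _ _ (hdiffOn _ hy), pd2P1, pd2P2, pd2P3]
  have e22 := pd_expand (v := (0,1,0)) (z := sphProj x)
      (c1 := fun y : ℝ×ℝ×ℝ => -4 * y.1 * y.2.1 / (1 + (y.2.1 ^ 2 + y.2.2 ^ 2)) ^ 2)
      (c2 := fun y : ℝ×ℝ×ℝ =>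
        2 * y.1 * (1 - y.2.1 ^ 2 + y.2.2 ^ 2) / (1 + (y.2.1 ^ 2 + y.2.2 ^ 2)) ^ 2)
      (c3 := fun y : ℝ×ℝ×ℝ => -4 * y.1 * y.2.1 * y.2.2 / (1 + (y.2.1 ^ 2 + y.2.2 ^ 2)) ^ 2)
      (G1 := fun y => pd (1,0,0) φ (sphProjInv y))
      (G2 := fun y => pd (0,1,0) φ (sphProjInv y))
      (G3 := fun y => pd (0,0,1) φ (sphProjInv y))
      (by fun_prop (disch := positivity)) (by fun_prop (disch := positivity))
      (by fun_prop (disch := positivity)) hG1 hG2 hG3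
  rw [pd2B1, pd2B2, pd2B3,
      pd_comp (pd (1,0,0) φ) (0,1,0) (sphProj x) hgz1,
      pd_comp (pd (0,1,0) φ) (0,1,0) (sphProj x) hgz2,
      pd_comp (pd (0,0,1) φ) (0,1,0) (sphProj x) hgz3,
      pd2P1, pd2P2, pd2P3, hinv] at e22
  simp only [hinv, hkey] at e22
  have hψ22 := (pd_congr (v := (0,1,0)) hev2).trans e22
  -- second order, direction (0,0,1)
  have hev3 : pd (0,0,1) (fun y => φ (sphProjInv y)) =ᶠ[nhds (sphProj x)] (fun y =>
      -4 * y.1 * y.2.2 / (1 + (y.2.1 ^ 2 + y.2.2 ^ 2)) ^ 2 * pd (1,0,0) φ (sphProjInv y)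
        + -4 * y.1 * y.2.1 * y.2.2 / (1 + (y.2.1 ^ 2 + y.2.2 ^ 2)) ^ 2
            * pd (0,1,0) φ (sphProjInv y)
        + 2 * y.1 * (1 + y.2.1 ^ 2 - y.2.2 ^ 2) / (1 + (y.2.1 ^ 2 + y.2.2 ^ 2)) ^ 2
            * pd (0,0,1) φ (sphProjInv y)) := by
    filter_upwards [hWev] with y hy
    rw [pd_comp φ _ _ (hdiffOn _ hy), pd3P1, pd3P2, pd3P3]
  have e33 := pd_expand (v := (0,0,1)) (z := sphProj x)
      (c1 := fun y : ℝ×ℝ×ℝ => -4 * y.1 * y.2.2 / (1 + (y.2.1 ^ 2 + y.2.2 ^ 2)) ^ 2)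
      (c2 := fun y : ℝ×ℝ×ℝ => -4 * y.1 * y.2.1 * y.2.2 / (1 + (y.2.1 ^ 2 + y.2.2 ^ 2)) ^ 2)
      (c3 := fun y : ℝ×ℝ×ℝ =>
        2 * y.1 * (1 + y.2.1 ^ 2 - y.2.2 ^ 2) / (1 + (y.2.1 ^ 2 + y.2.2 ^ 2)) ^ 2)
      (G1 := fun y => pd (1,0,0) φ (sphProjInv y))
      (G2 := fun y => pd (0,1,0) φ (sphProjInv y))
      (G3 := fun y => pd (0,0,1) φ (sphProjInv y))
      (by fun_prop (disch := positivity)) (by fun_prop (disch := positivity))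
      (by fun_prop (disch := positivity)) hG1 hG2 hG3
  rw [pd3C1, pd3B3, pd3C3,
      pd_comp (pd (1,0,0) φ) (0,0,1) (sphProj x) hgz1,
      pd_comp (pd (0,1,0) φ) (0,0,1) (sphProj x) hgz2,
      pd_comp (pd (0,0,1) φ) (0,0,1) (sphProj x) hgz3,
      pd3P1, pd3P2, pd3P3, hinv] at e33
  simp only [hinv, hkey] at e33
  have hψ33 := (pd_congr (v := (0,0,1)) hev3).trans e33
  -- assemble
  rw [show φ ∘ sphProjInv = fun y => φ (sphProjInv y) from rfl, hψ11, hψ22, hψ33, hfirst]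
  simp only [hkey]
  simp only [hsymm (0,1,0) (1,0,0), hsymm (0,0,1) (1,0,0), hsymm (0,0,1) (0,1,0)]
  have ht0 : (sphProj x).1 ≠ 0 := ne_of_gt hn0
  have hQ0 : (1 : ℝ) + ((sphProj x).2.1 ^ 2 + (sphProj x).2.2 ^ 2) ≠ 0 := by positivity
  field_simp
  ring
end
end

section
/- Let E be the open unit disc in R^2 and let F2, F3 be C^1 functions on the closed disc. If (i) d(F3)/dy2 - d(F2)/dy3 = 0 in E, (ii) d(F2)/dy2 + d(F3)/dy3 = 0 in E, and (iii) y2 F2 + y3 F3 = 0 on the boundary circle y2^2 + y3^2 = 1, then F2 and F3 vanish identically on the closed unit disc. -/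
noncomputable section

/-- The open unit disc in `ℝ²`. -/
def unitDisc : Set (ℝ × ℝ) := {p | p.1 ^ 2 + p.2 ^ 2 < 1}

/-- The closed unit disc in `ℝ²`. -/
def closedUnitDisc : Set (ℝ × ℝ) := {p | p.1 ^ 2 + p.2 ^ 2 ≤ 1}

/-- Directional (partial) derivative of a function on `ℝ²`. -/
def pd2 (v : ℝ × ℝ) (f : ℝ × ℝ → ℝ) (p : ℝ × ℝ) : ℝ := fderiv ℝ f p v

open Complex Metric Set Filter

lemma sq_re_add_sq_im (z : ℂ) : z.re ^ 2 + z.im ^ 2 = ‖z‖ ^ 2 := by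
  rw [Complex.sq_norm, Complex.normSq_apply]; ring

lemma isOpen_unitDisc : IsOpen unitDisc := by
  have : unitDisc = (fun p : ℝ × ℝ => p.1 ^ 2 + p.2 ^ 2) ⁻¹' Set.Iio 1 := rfl
  rw [this]
  exact isOpen_Iio.preimage (by fun_prop)

lemma tendsto_inv_add_two : Filter.Tendsto (fun n : ℕ => 1 / ((n : ℝ) + 2)) atTop (nhds 0) := by
  have h := (tendsto_one_div_add_atTop_nhds_zero_nat (𝕜 := ℝ)).comp (Filter.tendsto_add_atTop_nat 1)
  have he : (fun n : ℕ => 1 / ((n : ℝ) + 2)) =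
      (fun n : ℕ => 1 / ((n : ℝ) + 1)) ∘ (fun n => n + 1) := by
    funext n; simp [Function.comp]; ring_nf
  rw [he]; exact h

lemma density_aux : closedUnitDisc ⊆ closure (unitDisc \ {((0:ℝ), (0:ℝ))}) := by
  intro p hp
  rw [mem_closure_iff_seq_limit]
  by_cases hp0 : p = ((0:ℝ), (0:ℝ))
  · refine ⟨fun n => (1 / ((n : ℝ) + 2), 0), fun n => ?_, ?_⟩
    · have h1 : (0:ℝ) < (n : ℝ) + 2 := by positivity
      have h3 : (0:ℝ) < 1 / ((n : ℝ) + 2) := by positivity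
      have h4 : 1 / ((n : ℝ) + 2) ≤ 1 / 2 := by
        apply one_div_le_one_div_of_le
        · norm_num
        · have := Nat.cast_nonneg (α := ℝ) n; linarith
      constructor
      · show (1 / ((n : ℝ) + 2)) ^ 2 + (0:ℝ) ^ 2 < 1
        nlinarith
      · simp only [Set.mem_singleton_iff, Prod.mk.injEq, not_and]
        intro h
        exact absurd h (ne_of_gt h3)
    · rw [hp0]
      exact tendsto_inv_add_two.prodMk_nhds tendsto_const_nhds
  · refine ⟨fun n => (1 - 1 / ((n : ℝ) + 2)) • p, fun n => ?_, ?_⟩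
    · have h1 : (0:ℝ) < (n : ℝ) + 2 := by positivity
      have h3 : (0:ℝ) < 1 / ((n : ℝ) + 2) := by positivity
      have h4 : 1 / ((n : ℝ) + 2) ≤ 1 / 2 := by
        apply one_div_le_one_div_of_le
        · norm_num
        · have := Nat.cast_nonneg (α := ℝ) n; linarith
      set t : ℝ := 1 - 1 / ((n : ℝ) + 2) with htdef
      have ht0 : 0 < t := by rw [htdef]; linarith
      have ht1 : t < 1 := by rw [htdef]; linarith
      constructor
      · show (t • p).1 ^ 2 + (t • p).2 ^ 2 < 1
        have hple : p.1 ^ 2 + p.2 ^ 2 ≤ 1 := hp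
        show (t * p.1) ^ 2 + (t * p.2) ^ 2 < 1
        have h5 : t ^ 2 < 1 := by nlinarith
        calc (t * p.1) ^ 2 + (t * p.2) ^ 2 = t ^ 2 * (p.1 ^ 2 + p.2 ^ 2) := by ring
          _ ≤ t ^ 2 := by nlinarith
          _ < 1 := h5
      · simp only [Set.mem_singleton_iff]
        intro h
        apply hp0
        have ha : t * p.1 = 0 := congrArg Prod.fst h
        have hb : t * p.2 = 0 := congrArg Prod.snd h
        have hp1 : p.1 = 0 := by
          rcases mul_eq_zero.mp ha with h' | h'
          · exact absurd h' (ne_of_gt ht0)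
          · exact h'
        have hp2 : p.2 = 0 := by
          rcases mul_eq_zero.mp hb with h' | h'
          · exact absurd h' (ne_of_gt ht0)
          · exact h'
        exact Prod.ext hp1 hp2
    · have ht : Filter.Tendsto (fun n : ℕ => 1 - 1 / ((n : ℝ) + 2)) atTop (nhds 1) := by
        simpa using tendsto_const_nhds.sub tendsto_inv_add_two
      simpa using ht.smul_const p

/-- a `C¹` vector field `(F₂, F₃)` on the closed unit disc which is
curl-free and divergence-free in the open disc and has vanishing normal component
on the boundary circle vanishes identically. -/
theorem curl_div_free_vanishing_normal_trace_eq_zero (F2 F3 : ℝ × ℝ → ℝ)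
    (hF2 : ContDiffOn ℝ 1 F2 closedUnitDisc) (hF3 : ContDiffOn ℝ 1 F3 closedUnitDisc)
    (hcurl : ∀ p ∈ unitDisc, pd2 (1, 0) F3 p - pd2 (0, 1) F2 p = 0)
    (hdiv : ∀ p ∈ unitDisc, pd2 (1, 0) F2 p + pd2 (0, 1) F3 p = 0)
    (hbc : ∀ p : ℝ × ℝ, p.1 ^ 2 + p.2 ^ 2 = 1 → p.1 * F2 p + p.2 * F3 p = 0) :
    ∀ p ∈ closedUnitDisc, F2 p = 0 ∧ F3 p = 0 := by
  set e : ℂ → ℝ × ℝ := fun z => (z.re, z.im) with he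
  set f : ℂ → ℂ := fun z => (F2 (e z) : ℂ) - (F3 (e z) : ℂ) * Complex.I with hfdef
  -- membership transfers
  have hmemc : ∀ z : ℂ, z ∈ closedBall (0:ℂ) 1 → e z ∈ closedUnitDisc := by
    intro z hz
    have : ‖z‖ ≤ 1 := by simpa using mem_closedBall_zero_iff.mp hz
    show z.re ^ 2 + z.im ^ 2 ≤ 1
    rw [sq_re_add_sq_im]
    nlinarith [norm_nonneg z]
  have hmemo : ∀ z : ℂ, z ∈ ball (0:ℂ) 1 → e z ∈ unitDisc := by
    intro z hz
    have : ‖z‖ < 1 := by simpa using mem_ball_zero_iff.mp hz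
    show z.re ^ 2 + z.im ^ 2 < 1
    rw [sq_re_add_sq_im]
    nlinarith [norm_nonneg z]
  -- complex differentiability of f in the open ball
  have hfd : ∀ z ∈ ball (0:ℂ) 1, DifferentiableAt ℂ f z := by
    intro z hz
    have hp : e z ∈ unitDisc := hmemo z hz
    have hnhds : closedUnitDisc ∈ nhds (e z) :=
      Filter.mem_of_superset (isOpen_unitDisc.mem_nhds hp)
        (fun q hq => show q.1 ^ 2 + q.2 ^ 2 ≤ 1 from le_of_lt hq)
    have hF2at : DifferentiableAt ℝ F2 (e z) :=
      (hF2.contDiffAt hnhds).differentiableAt one_ne_zero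
    have hF3at : DifferentiableAt ℝ F3 (e z) :=
      (hF3.contDiffAt hnhds).differentiableAt one_ne_zero
    set D2 := fderiv ℝ F2 (e z) with hD2
    set D3 := fderiv ℝ F3 (e z) with hD3
    have hb : D2 (0, 1) = D3 (1, 0) := by
      have := hcurl (e z) hp
      simp only [pd2] at this
      rw [hD2, hD3]; linarith
    have hd : D3 (0, 1) = -D2 (1, 0) := by
      have := hdiv (e z) hp
      simp only [pd2] at this
      rw [hD2, hD3]; linarith
    have hE : HasFDerivAt e (Complex.equivRealProdCLM : ℂ →L[ℝ] ℝ × ℝ) z :=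
      Complex.equivRealProdCLM.hasFDerivAt
    have h2 : HasFDerivAt (fun w : ℂ => F2 (e w))
        (D2.comp (Complex.equivRealProdCLM : ℂ →L[ℝ] ℝ × ℝ)) z :=
      hF2at.hasFDerivAt.comp z hE
    have h3 : HasFDerivAt (fun w : ℂ => F3 (e w))
        (D3.comp (Complex.equivRealProdCLM : ℂ →L[ℝ] ℝ × ℝ)) z :=
      hF3at.hasFDerivAt.comp z hE
    have h2' : HasFDerivAt (fun w : ℂ => (F2 (e w) : ℂ))
        (Complex.ofRealCLM.comp (D2.comp (Complex.equivRealProdCLM : ℂ →L[ℝ] ℝ × ℝ))) z :=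
      Complex.ofRealCLM.hasFDerivAt.comp z h2
    have h3' : HasFDerivAt (fun w : ℂ => (F3 (e w) : ℂ))
        (Complex.ofRealCLM.comp (D3.comp (Complex.equivRealProdCLM : ℂ →L[ℝ] ℝ × ℝ))) z :=
      Complex.ofRealCLM.hasFDerivAt.comp z h3
    have h3'' : HasFDerivAt (fun w : ℂ => (F3 (e w) : ℂ) * Complex.I)
        (Complex.I • (Complex.ofRealCLM.comp
          (D3.comp (Complex.equivRealProdCLM : ℂ →L[ℝ] ℝ × ℝ)))) z :=
      h3'.mul_const Complex.I
    have hreal : HasFDerivAt f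
        ((Complex.ofRealCLM.comp (D2.comp (Complex.equivRealProdCLM : ℂ →L[ℝ] ℝ × ℝ))) -
          (Complex.I • (Complex.ofRealCLM.comp
            (D3.comp (Complex.equivRealProdCLM : ℂ →L[ℝ] ℝ × ℝ))))) z :=
      h2'.sub h3''
    have hcomplex : HasFDerivAt f
        ((1 : ℂ →L[ℂ] ℂ).smulRight ((D2 (1, 0) : ℂ) - (D3 (1, 0) : ℂ) * Complex.I)) z := by
      apply hasFDerivAt_of_restrictScalars ℝ hreal
      ext w
      have hw : (w.re, w.im) = w.re • ((1:ℝ), (0:ℝ)) + w.im • ((0:ℝ), (1:ℝ)) := by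
        simp [Prod.ext_iff]
      have hw2 : D2 (w.re, w.im) = w.re * D2 (1, 0) + w.im * D2 (0, 1) := by
        rw [hw, map_add, map_smul, map_smul]; simp [smul_eq_mul]
      have hw3 : D3 (w.re, w.im) = w.re * D3 (1, 0) + w.im * D3 (0, 1) := by
        rw [hw, map_add, map_smul, map_smul]; simp [smul_eq_mul]
      simp only [ContinuousLinearMap.coe_restrictScalars', ContinuousLinearMap.smulRight_apply,
        ContinuousLinearMap.one_apply, ContinuousLinearMap.coe_sub', Pi.sub_apply,
        ContinuousLinearMap.coe_comp', Function.comp_apply, ContinuousLinearMap.coe_smul',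
        Pi.smul_apply, Complex.ofRealCLM_apply, Complex.equivRealProdCLM_apply]
      show w • ((D2 (1, 0) : ℂ) - (D3 (1, 0) : ℂ) * Complex.I) =
        ((D2 (w.re, w.im) : ℂ)) - Complex.I • ((D3 (w.re, w.im) : ℂ))
      rw [hw2, hw3, hb, hd]
      apply Complex.ext <;>
        simp [Complex.mul_re, Complex.mul_im, smul_eq_mul] <;> ring
    exact hcomplex.differentiableAt
  -- continuity of f on the closed ball
  have hecont : Continuous e := Complex.continuous_re.prodMk Complex.continuous_im
  have hfc : ContinuousOn f (closedBall (0:ℂ) 1) := by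
    apply ContinuousOn.sub
    · exact Complex.continuous_ofReal.comp_continuousOn
        (hF2.continuousOn.comp hecont.continuousOn hmemc)
    · exact ContinuousOn.mul (Complex.continuous_ofReal.comp_continuousOn
        (hF3.continuousOn.comp hecont.continuousOn hmemc)) continuousOn_const
  -- the function g z = z * f z
  set g : ℂ → ℂ := fun z => z * f z with hgdef
  have hgd : ∀ z ∈ ball (0:ℂ) 1, DifferentiableAt ℂ g z :=
    fun z hz => differentiableAt_id.mul (hfd z hz)
  have hgdo : DifferentiableOn ℂ g (ball (0:ℂ) 1) :=
    fun z hz => (hgd z hz).differentiableWithinAt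
  have hgc : ContinuousOn g (closedBall (0:ℂ) 1) :=
    (continuous_id.continuousOn).mul hfc
  have hclos : closure (ball (0:ℂ) 1) = closedBall (0:ℂ) 1 := closure_ball 0 one_ne_zero
  have hfront : frontier (ball (0:ℂ) 1) = sphere (0:ℂ) 1 := frontier_ball 0 one_ne_zero
  -- Re g = 0 on the sphere
  have hbd : ∀ z : ℂ, z ∈ sphere (0:ℂ) 1 → (g z).re = 0 := by
    intro z hz
    have hn : ‖z‖ = 1 := by simpa using mem_sphere_zero_iff_norm.mp hz
    have h1 : (e z).1 ^ 2 + (e z).2 ^ 2 = 1 := by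
      show z.re ^ 2 + z.im ^ 2 = 1
      rw [sq_re_add_sq_im, hn]; norm_num
    have := hbc (e z) h1
    show (z * ((F2 (e z) : ℂ) - (F3 (e z) : ℂ) * Complex.I)).re = 0
    simp only [Complex.mul_re, Complex.sub_re, Complex.sub_im, Complex.ofReal_re,
      Complex.ofReal_im, Complex.mul_re, Complex.mul_im, Complex.I_re, Complex.I_im]
    simp only [he] at this
    nlinarith [this]
  -- maximum modulus: Re g = 0 on the closed ball
  have hre0 : ∀ z ∈ closedBall (0:ℂ) 1, (g z).re = 0 := by
    have key : ∀ (s : ℝ), (s = 1 ∨ s = -1) → ∀ z ∈ closedBall (0:ℂ) 1,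
        Real.exp (s * (g z).re) ≤ 1 := by
      intro s hs z hz
      have hd : DiffContOnCl ℂ (fun w => Complex.exp ((s : ℂ) * g w)) (ball (0:ℂ) 1) := by
        constructor
        · exact (hgdo.const_smul (s:ℂ)).cexp |>.congr (fun w _ => by simp [smul_eq_mul])
        · rw [hclos]
          exact Complex.continuous_exp.comp_continuousOn (continuousOn_const.mul hgc)
      have hC : ∀ w ∈ frontier (ball (0:ℂ) 1), ‖Complex.exp ((s : ℂ) * g w)‖ ≤ 1 := by
        intro w hw
        rw [hfront] at hw
        rw [Complex.norm_exp]
        have : ((s : ℂ) * g w).re = s * (g w).re := by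
          simp [Complex.mul_re]
        rw [this, hbd w hw]
        simp
      have := Complex.norm_le_of_forall_mem_frontier_norm_le isBounded_ball hd hC
        (hclos ▸ hz)
      rw [Complex.norm_exp] at this
      have hrw : ((s : ℂ) * g z).re = s * (g z).re := by simp [Complex.mul_re]
      rw [hrw] at this
      exact this
    intro z hz
    have h1 := key 1 (Or.inl rfl) z hz
    have h2 := key (-1) (Or.inr rfl) z hz
    have h1' := Real.exp_le_one_iff.mp h1
    have h2' := Real.exp_le_one_iff.mp h2
    linarith
  -- derivative of g vanishes on the open ball
  have hgd0 : ∀ z ∈ ball (0:ℂ) 1, fderiv ℂ g z = 0 := by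
    intro z hz
    have hU : ball (0:ℂ) 1 ∈ nhds z := isOpen_ball.mem_nhds hz
    have hev : (fun w => (g w).re) =ᶠ[nhds z] fun _ => (0:ℝ) :=
      Filter.eventually_of_mem hU fun w hw => hre0 w (ball_subset_closedBall hw)
    have hgr : DifferentiableAt ℝ g z := (hgd z hz).restrictScalars ℝ
    have hcompd : fderiv ℝ (fun w => (g w).re) z = Complex.reCLM.comp (fderiv ℝ g z) :=
      (Complex.reCLM.hasFDerivAt.comp z hgr.hasFDerivAt).fderiv
    have hzero : fderiv ℝ (fun w => (g w).re) z = 0 := by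
      rw [hev.fderiv_eq]; exact fderiv_const_apply 0
    have hrs : fderiv ℝ g z = (fderiv ℂ g z).restrictScalars ℝ :=
      (hgd z hz).fderiv_restrictScalars ℝ
    set m := fderiv ℂ g z 1 with hm
    have h1 : m.re = 0 := by
      have := congrFun (congrArg DFunLike.coe (hzero.symm.trans hcompd)) 1
      simp only [ContinuousLinearMap.zero_apply, ContinuousLinearMap.coe_comp',
        Function.comp_apply, Complex.reCLM_apply] at this
      rw [hrs] at this
      simpa [hm] using this.symm
    have h2 : m.im = 0 := by
      have := congrFun (congrArg DFunLike.coe (hzero.symm.trans hcompd)) Complex.I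
      simp only [ContinuousLinearMap.zero_apply, ContinuousLinearMap.coe_comp',
        Function.comp_apply, Complex.reCLM_apply] at this
      rw [hrs] at this
      have hI : fderiv ℂ g z Complex.I = Complex.I * m := by
        have h' : fderiv ℂ g z Complex.I = fderiv ℂ g z (Complex.I • (1:ℂ)) := by norm_num
        rw [h', map_smul, smul_eq_mul, hm]
      simp only [ContinuousLinearMap.coe_restrictScalars'] at this
      rw [hI] at this
      simpa [Complex.mul_re] using this.symm
    have hm0 : m = 0 := Complex.ext h1 h2
    exact ContinuousLinearMap.ext_ring (by simpa [hm] using hm0)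
  -- g is constant 0 on the ball
  have hg0 : ∀ z ∈ ball (0:ℂ) 1, g z = 0 := by
    intro z hz
    have := (convex_ball (0:ℂ) 1).is_const_of_fderivWithin_eq_zero hgdo
      (fun x hx => by rw [fderivWithin_of_isOpen isOpen_ball hx]; exact hgd0 x hx)
      hz (mem_ball_self one_pos)
    rw [this]
    show (0:ℂ) * f 0 = 0
    ring
  -- F2 and F3 vanish on the punctured open disc
  have hvan : ∀ p ∈ unitDisc \ {((0:ℝ), (0:ℝ))}, F2 p = 0 ∧ F3 p = 0 := by
    rintro p ⟨hp, hp0⟩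
    set z : ℂ := ⟨p.1, p.2⟩ with hzdef
    have hez : e z = p := by simp [he, hzdef]
    have hzball : z ∈ ball (0:ℂ) 1 := by
      rw [mem_ball_zero_iff]
      have h1 : z.re ^ 2 + z.im ^ 2 < 1 := by
        show p.1 ^ 2 + p.2 ^ 2 < 1; exact hp
      rw [sq_re_add_sq_im] at h1
      nlinarith [norm_nonneg z]
    have hzne : z ≠ 0 := by
      intro h
      apply hp0
      have h1 : p.1 = 0 := congrArg Complex.re h
      have h2 : p.2 = 0 := congrArg Complex.im h
      simp [Set.mem_singleton_iff, Prod.ext_iff, h1, h2]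
    have := hg0 z hzball
    have hfz : f z = 0 := by
      rcases mul_eq_zero.mp this with h | h
      · exact absurd h hzne
      · exact h
    have hre : (f z).re = 0 := by rw [hfz]; rfl
    have him : (f z).im = 0 := by rw [hfz]; rfl
    rw [hfdef] at hre him
    simp only [hez, Complex.sub_re, Complex.sub_im, Complex.ofReal_re, Complex.ofReal_im,
      Complex.mul_re, Complex.mul_im, Complex.I_re, Complex.I_im] at hre him
    constructor
    · linarith [hre]
    · linarith [him]
  -- conclude by continuity and density
  have hEq2 : Set.EqOn F2 (fun _ => 0) closedUnitDisc := by
    apply Set.EqOn.of_subset_closure (s := unitDisc \ {((0:ℝ), (0:ℝ))})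
      (fun p hp => (hvan p hp).1) hF2.continuousOn continuousOn_const
      (fun p hp => show p.1 ^ 2 + p.2 ^ 2 ≤ 1 from le_of_lt hp.1) density_aux
  have hEq3 : Set.EqOn F3 (fun _ => 0) closedUnitDisc := by
    apply Set.EqOn.of_subset_closure (s := unitDisc \ {((0:ℝ), (0:ℝ))})
      (fun p hp => (hvan p hp).2) hF3.continuousOn continuousOn_const
      (fun p hp => show p.1 ^ 2 + p.2 ^ 2 ≤ 1 from le_of_lt hp.1) density_aux
  exact fun p hp => ⟨hEq2 hp, hEq3 hp⟩

end
end

section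
/- Let 0 < r_s < r_2, and let d1, d2, d4 be continuous functions on [r_s, r_2] with d1 > 0 and d4 >= 0, and let lambda >= 0, a4 > 0, a0 a1 >= 0. If X in C^2([r_s, r_2]) satisfies d1(t) X''(t) + (2/t + d2(t)) X'(t) - (lambda/(4t^2)) X(t) - a0 a1 d4(t) X(r_s) = 0 on [r_s, r_2], with boundary conditions X'(r_s) - a4 X(r_s) = 0 and X'(r_2) = 0, then X is identically zero. -/
noncomputable section

open Set


lemma exists_integrating_factor (rs r2 a0 a1 lam : ℝ) (d1 d2 d4 X : ℝ → ℝ)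
    (hrs : 0 < rs) (hr : rs < r2)
    (hd1c : ContinuousOn d1 (Icc rs r2)) (hd2c : ContinuousOn d2 (Icc rs r2))
    (hd1 : ∀ t ∈ Icc rs r2, 0 < d1 t)
    (hX : ContDiffOn ℝ 2 X (Icc rs r2))
    (heq : ∀ t ∈ Icc rs r2,
      d1 t * derivWithin (derivWithin X (Icc rs r2)) (Icc rs r2) t
        + (2 / t + d2 t) * derivWithin X (Icc rs r2) t
        - (lam / (4 * t ^ 2)) * X t - a0 * a1 * d4 t * X rs = 0) :
    ∃ p : ℝ → ℝ, Continuous p ∧ (∀ t, 0 < p t) ∧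
      ∀ t ∈ Icc rs r2, HasDerivWithinAt (fun s => p s * derivWithin X (Icc rs r2) s)
        (p t / d1 t * ((lam / (4 * t ^ 2)) * X t + a0 * a1 * d4 t * X rs)) (Icc rs r2) t := by
  have hUD : UniqueDiffOn ℝ (Icc rs r2) := uniqueDiffOn_Icc hr
  set X' := derivWithin X (Icc rs r2) with hX'def
  set X'' := derivWithin X' (Icc rs r2) with hX''def
  -- continuous extension of (2/t + d2 t)/d1 t
  have hne : ∀ t ∈ Icc rs r2, t ≠ 0 := fun t ht => (lt_of_lt_of_le hrs ht.1).ne'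
  have hgc : ContinuousOn (fun t => (2 / t + d2 t) / d1 t) (Icc rs r2) := by
    apply ContinuousOn.div _ hd1c (fun t ht => (hd1 t ht).ne')
    exact (continuousOn_const.div continuousOn_id hne).add hd2c
  set G : ℝ → ℝ := IccExtend hr.le ((Icc rs r2).restrict fun t => (2 / t + d2 t) / d1 t)
    with hGdef
  have hGc : Continuous G := (continuousOn_iff_continuous_restrict.1 hgc).Icc_extend'
  have hGeq : ∀ t (ht : t ∈ Icc rs r2), G t = (2 / t + d2 t) / d1 t := by
    intro t ht
    rw [hGdef, IccExtend_of_mem hr.le _ ht]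
    rfl
  set p : ℝ → ℝ := fun t => Real.exp (∫ s in rs..t, G s) with hpdef
  have hppos : ∀ t, 0 < p t := fun t => Real.exp_pos _
  have hpd : ∀ t, HasDerivAt p (p t * G t) t := by
    intro t
    simpa [hpdef, mul_comm] using ((hGc.integral_hasStrictDerivAt rs t).hasDerivAt.exp)
  have hpc : Continuous p := by
    exact Real.continuous_exp.comp (intervalIntegral.continuous_primitive
      (fun a b => hGc.intervalIntegrable _ _) rs)
  refine ⟨p, hpc, hppos, fun t ht => ?_⟩
  have hX'd : HasDerivWithinAt X' (X'' t) (Icc rs r2) t :=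
    (((hX.derivWithin (m := 1) hUD (by norm_num)).differentiableOn one_ne_zero) t ht).hasDerivWithinAt
  have h1 : HasDerivWithinAt (fun s => p s * X' s)
      (p t * G t * X' t + p t * X'' t) (Icc rs r2) t :=
    ((hpd t).hasDerivWithinAt).mul hX'd
  convert h1 using 1
  have hd1t : d1 t ≠ 0 := (hd1 t ht).ne'
  have ht0 : t ≠ 0 := hne t ht
  have he := heq t ht
  have hxx : X'' t = (lam / (4 * t ^ 2) * X t + a0 * a1 * d4 t * X rs
      - (2 / t + d2 t) * X' t) / d1 t := by
    rw [eq_div_iff hd1t]; linarith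
  rw [hGeq t ht, hxx]
  field_simp
  ring

lemma aux_not_neg (rs r2 a0 a1 a4 lam : ℝ) (d1 d2 d4 : ℝ → ℝ) (X : ℝ → ℝ)
    (hrs : 0 < rs) (hr : rs < r2)
    (hd1c : ContinuousOn d1 (Icc rs r2)) (hd2c : ContinuousOn d2 (Icc rs r2))
    (hd4c : ContinuousOn d4 (Icc rs r2))
    (hd1 : ∀ t ∈ Icc rs r2, 0 < d1 t) (hd4 : ∀ t ∈ Icc rs r2, 0 ≤ d4 t)
    (hlam : 0 ≤ lam) (ha4 : 0 < a4) (ha01 : 0 ≤ a0 * a1)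
    (hX : ContDiffOn ℝ 2 X (Icc rs r2))
    (heq : ∀ t ∈ Icc rs r2,
      d1 t * derivWithin (derivWithin X (Icc rs r2)) (Icc rs r2) t
        + (2 / t + d2 t) * derivWithin X (Icc rs r2) t
        - (lam / (4 * t ^ 2)) * X t - a0 * a1 * d4 t * X rs = 0)
    (hbc1 : derivWithin X (Icc rs r2) rs - a4 * X rs = 0)
    (hbc2 : derivWithin X (Icc rs r2) r2 = 0) :
    ¬ X rs < 0 := by
  intro hneg
  obtain ⟨p, hpc, hppos, hW⟩ :=
    exists_integrating_factor rs r2 a0 a1 lam d1 d2 d4 X hrs hr hd1c hd2c hd1 hX heq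
  have hUD : UniqueDiffOn ℝ (Icc rs r2) := uniqueDiffOn_Icc hr
  set X' := derivWithin X (Icc rs r2) with hX'def
  set W : ℝ → ℝ := fun s => p s * X' s with hWdef
  have hmem : rs ∈ Icc rs r2 := left_mem_Icc.2 hr.le
  have hmem2 : r2 ∈ Icc rs r2 := right_mem_Icc.2 hr.le
  have hX'cd : ContDiffOn ℝ 1 X' (Icc rs r2) := hX.derivWithin hUD (by norm_num)
  have hX'c : ContinuousOn X' (Icc rs r2) := hX'cd.continuousOn
  have hWc : ContinuousOn W (Icc rs r2) := (hpc.continuousOn).mul hX'c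
  have hWrsneg : W rs < 0 := by
    have h1 : X' rs = a4 * X rs := by linarith
    have : W rs = p rs * (a4 * X rs) := by rw [hWdef]; simp [h1]
    rw [this]
    exact mul_neg_of_pos_of_neg (hppos rs) (mul_neg_of_pos_of_neg ha4 hneg)
  have hX'at : ∀ x ∈ Ioo rs r2, HasDerivAt X (X' x) x := by
    intro x hx
    exact ((hX.differentiableOn (by norm_num) x (Ioo_subset_Icc_self hx)).hasDerivWithinAt).hasDerivAt
      (Icc_mem_nhds hx.1 hx.2)
  -- key claim
  have key : ∀ t1 ∈ Icc rs r2, rs < t1 → (∀ s ∈ Ico rs t1, X s ≤ 0) →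
      X t1 < X rs ∧ W t1 < 0 := by
    intro t1 ht1 hrst1 hXneg
    have hsub : Icc rs t1 ⊆ Icc rs r2 := Icc_subset_Icc le_rfl ht1.2
    have hWat : ∀ x ∈ Ioo rs t1, HasDerivAt W
        (p x / d1 x * ((lam / (4 * x ^ 2)) * X x + a0 * a1 * d4 x * X rs)) x := by
      intro x hx
      have hx' : x ∈ Ioo rs r2 := ⟨hx.1, lt_of_lt_of_le hx.2 ht1.2⟩
      exact (hW x (Ioo_subset_Icc_self hx')).hasDerivAt (Icc_mem_nhds hx'.1 hx'.2)
    have hderivnonpos : ∀ x ∈ interior (Icc rs t1), deriv W x ≤ 0 := by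
      intro x hx
      rw [interior_Icc] at hx
      rw [(hWat x hx).deriv]
      have hxI : x ∈ Icc rs r2 := hsub (Ioo_subset_Icc_self hx)
      apply mul_nonpos_of_nonneg_of_nonpos (div_nonneg (hppos x).le (hd1 x hxI).le)
      have h1 : lam / (4 * x ^ 2) * X x ≤ 0 := by
        apply mul_nonpos_of_nonneg_of_nonpos
        · have : 0 < x := lt_trans hrs hx.1
          positivity
        · exact hXneg x ⟨hx.1.le, hx.2⟩
      have h2 : a0 * a1 * d4 x * X rs ≤ 0 :=
        mul_nonpos_of_nonneg_of_nonpos (mul_nonneg ha01 (hd4 x hxI)) hneg.le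
      linarith
    have hanti : AntitoneOn W (Icc rs t1) := by
      apply antitoneOn_of_deriv_nonpos (convex_Icc rs t1) (hWc.mono hsub)
      · intro x hx
        rw [interior_Icc] at hx
        exact ((hWat x hx).differentiableAt).differentiableWithinAt
      · exact hderivnonpos
    have hWle : ∀ s ∈ Icc rs t1, W s ≤ W rs := fun s hs =>
      hanti (left_mem_Icc.2 hrst1.le) hs hs.1
    have hXanti : StrictAntiOn X (Icc rs t1) := by
      apply strictAntiOn_of_deriv_neg (convex_Icc rs t1) (hX.continuousOn.mono hsub)
      intro x hx
      rw [interior_Icc] at hx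
      have hx' : x ∈ Ioo rs r2 := ⟨hx.1, lt_of_lt_of_le hx.2 ht1.2⟩
      rw [(hX'at x hx').deriv]
      have hWx : p x * X' x < 0 := by
        have := hWle x (Ioo_subset_Icc_self hx)
        calc p x * X' x = W x := rfl
        _ ≤ W rs := this
        _ < 0 := hWrsneg
      nlinarith [hppos x]
    exact ⟨hXanti (left_mem_Icc.2 hrst1.le) (right_mem_Icc.2 hrst1.le) hrst1,
      lt_of_le_of_lt (hWle t1 (right_mem_Icc.2 hrst1.le)) hWrsneg⟩
  -- split on whether X is ever nonnegative
  by_cases hT : (Icc rs r2 ∩ X ⁻¹' Ici 0).Nonempty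
  · set T := Icc rs r2 ∩ X ⁻¹' Ici 0 with hTdef
    have hTcl : IsClosed T :=
      hX.continuousOn.preimage_isClosed_of_isClosed isClosed_Icc isClosed_Ici
    have hTbdd : BddBelow T := bddBelow_Icc.mono inter_subset_left
    set t1 := sInf T with ht1def
    have ht1T : t1 ∈ T := hTcl.csInf_mem hT hTbdd
    have ht1I : t1 ∈ Icc rs r2 := ht1T.1
    have hXt1 : 0 ≤ X t1 := ht1T.2
    have hrst1 : rs < t1 := by
      rcases lt_or_eq_of_le ht1I.1 with h | h
      · exact h
      · exfalso; rw [← h] at hXt1; linarith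
    have hXneg : ∀ s ∈ Ico rs t1, X s ≤ 0 := by
      intro s hs
      by_contra hc
      push_neg at hc
      have hsT : s ∈ T := ⟨⟨hs.1, le_trans hs.2.le ht1I.2⟩, le_of_lt hc⟩
      have := csInf_le hTbdd hsT
      rw [← ht1def] at this
      linarith [hs.2]
    have := (key t1 ht1I hrst1 hXneg).1
    linarith
  · have hXneg : ∀ s ∈ Ico rs r2, X s ≤ 0 := by
      intro s hs
      by_contra hc
      push_neg at hc
      exact hT ⟨s, ⟨hs.1, hs.2.le⟩, le_of_lt hc⟩
    have hW2 : W r2 < 0 := (key r2 hmem2 hr hXneg).2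
    have : W r2 = 0 := by show p r2 * X' r2 = 0; rw [hbc2, mul_zero]
    linarith

/-- uniqueness for the nonlocal second-order ODE with oblique boundary
conditions arising from the Fourier modes of the potential-function problem. -/
theorem nonlocal_ode_uniqueness (rs r2 a0 a1 a4 lam : ℝ) (d1 d2 d4 : ℝ → ℝ) (X : ℝ → ℝ)
    (hrs : 0 < rs) (hr : rs < r2)
    (hd1c : ContinuousOn d1 (Icc rs r2)) (hd2c : ContinuousOn d2 (Icc rs r2))
    (hd4c : ContinuousOn d4 (Icc rs r2))
    (hd1 : ∀ t ∈ Icc rs r2, 0 < d1 t) (hd4 : ∀ t ∈ Icc rs r2, 0 ≤ d4 t)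
    (hlam : 0 ≤ lam) (ha4 : 0 < a4) (ha01 : 0 ≤ a0 * a1)
    (hX : ContDiffOn ℝ 2 X (Icc rs r2))
    (heq : ∀ t ∈ Icc rs r2,
      d1 t * derivWithin (derivWithin X (Icc rs r2)) (Icc rs r2) t
        + (2 / t + d2 t) * derivWithin X (Icc rs r2) t
        - (lam / (4 * t ^ 2)) * X t - a0 * a1 * d4 t * X rs = 0)
    (hbc1 : derivWithin X (Icc rs r2) rs - a4 * X rs = 0)
    (hbc2 : derivWithin X (Icc rs r2) r2 = 0) :
    ∀ t ∈ Icc rs r2, X t = 0 := by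
  have hUD : UniqueDiffOn ℝ (Icc rs r2) := uniqueDiffOn_Icc hr
  have hmem : rs ∈ Icc rs r2 := left_mem_Icc.2 hr.le
  have hmem2 : r2 ∈ Icc rs r2 := right_mem_Icc.2 hr.le
  set X' := derivWithin X (Icc rs r2) with hX'def
  -- step 1 : X rs = 0
  have hnotneg : ¬ X rs < 0 :=
    aux_not_neg rs r2 a0 a1 a4 lam d1 d2 d4 X hrs hr hd1c hd2c hd4c hd1 hd4
      hlam ha4 ha01 hX heq hbc1 hbc2
  have hY'eq : ∀ t ∈ Icc rs r2, derivWithin (fun s => -X s) (Icc rs r2) t = -X' t :=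
    fun t ht => derivWithin.fun_neg
  have hY''eq : ∀ t ∈ Icc rs r2,
      derivWithin (derivWithin (fun s => -X s) (Icc rs r2)) (Icc rs r2) t
        = -derivWithin X' (Icc rs r2) t := by
    intro t ht
    rw [derivWithin_congr (fun s hs => hY'eq s hs) (hY'eq t ht)]
    exact derivWithin.fun_neg
  have hnotpos : ¬ (0:ℝ) < X rs := by
    have h := aux_not_neg rs r2 a0 a1 a4 lam d1 d2 d4 (fun s => -X s) hrs hr hd1c hd2c hd4c
      hd1 hd4 hlam ha4 ha01 hX.neg
      (fun t ht => by rw [hY''eq t ht, hY'eq t ht]; have := heq t ht; ring_nf; ring_nf at this; linarith)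
      (by rw [hY'eq rs hmem]; linarith)
      (by rw [hY'eq r2 hmem2]; simp only [hX'def] at hbc2 ⊢; rw [hbc2, neg_zero])
    simpa using h
  have hXrs : X rs = 0 := by linarith [not_lt.1 hnotneg, not_lt.1 hnotpos]
  -- step 2 : energy argument
  obtain ⟨p, hpc, hppos, hW⟩ :=
    exists_integrating_factor rs r2 a0 a1 lam d1 d2 d4 X hrs hr hd1c hd2c hd1 hX heq
  set W : ℝ → ℝ := fun s => p s * X' s with hWdef
  have hX'cd : ContDiffOn ℝ 1 X' (Icc rs r2) := hX.derivWithin hUD (by norm_num)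
  have hX'c : ContinuousOn X' (Icc rs r2) := hX'cd.continuousOn
  have hWc : ContinuousOn W (Icc rs r2) := (hpc.continuousOn).mul hX'c
  have hX'rs : X' rs = 0 := by rw [hXrs] at hbc1; simpa using hbc1
  have hWrs : W rs = 0 := by show p rs * X' rs = 0; rw [hX'rs, mul_zero]
  have hWr2 : W r2 = 0 := by show p r2 * X' r2 = 0; rw [hbc2, mul_zero]
  have hX'at : ∀ x ∈ Ioo rs r2, HasDerivAt X (X' x) x := fun x hx =>
    ((hX.differentiableOn (by norm_num) x (Ioo_subset_Icc_self hx)).hasDerivWithinAt).hasDerivAt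
      (Icc_mem_nhds hx.1 hx.2)
  set Z : ℝ → ℝ := fun s => W s * X s with hZdef
  have hZc : ContinuousOn Z (Icc rs r2) := hWc.mul hX.continuousOn
  have hZval : ∀ x ∈ Icc rs r2,
      (p x / d1 x * ((lam / (4 * x ^ 2)) * X x + a0 * a1 * d4 x * X rs)) * X x + W x * X' x
        = p x / d1 x * (lam / (4 * x ^ 2)) * X x ^ 2 + p x * X' x ^ 2 := by
    intro x hx
    rw [hXrs]; show _ = _ ; ring
  have hZat : ∀ x ∈ Ioo rs r2, HasDerivAt Z
      (p x / d1 x * (lam / (4 * x ^ 2)) * X x ^ 2 + p x * X' x ^ 2) x := by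
    intro x hx
    have h1 : HasDerivAt W (p x / d1 x * ((lam / (4 * x ^ 2)) * X x + a0 * a1 * d4 x * X rs)) x :=
      (hW x (Ioo_subset_Icc_self hx)).hasDerivAt (Icc_mem_nhds hx.1 hx.2)
    have := h1.mul (hX'at x hx)
    rw [hZval x (Ioo_subset_Icc_self hx)] at this
    exact this
  have hZnonneg : ∀ x ∈ Ioo rs r2, 0 ≤ p x / d1 x * (lam / (4 * x ^ 2)) * X x ^ 2
      + p x * X' x ^ 2 := by
    intro x hx
    have hxI := Ioo_subset_Icc_self hx
    have hx0 : 0 < x := lt_trans hrs hx.1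
    have := hppos x
    have := hd1 x hxI
    positivity
  have hZmono : MonotoneOn Z (Icc rs r2) := by
    apply monotoneOn_of_deriv_nonneg (convex_Icc rs r2) hZc
    · intro x hx
      rw [interior_Icc] at hx
      exact ((hZat x hx).differentiableAt).differentiableWithinAt
    · intro x hx
      rw [interior_Icc] at hx
      rw [(hZat x hx).deriv]
      exact hZnonneg x hx
  have hZzero : ∀ t ∈ Icc rs r2, Z t = 0 := by
    intro t ht
    have h1 : Z rs ≤ Z t := hZmono hmem ht ht.1
    have h2 : Z t ≤ Z r2 := hZmono ht hmem2 ht.2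
    have h3 : Z rs = 0 := by show W rs * X rs = 0; rw [hWrs, zero_mul]
    have h4 : Z r2 = 0 := by show W r2 * X r2 = 0; rw [hWr2, zero_mul]
    linarith [h1, h2, h3.le, h4.le, h3.ge, h4.ge]
  have hX'zero : ∀ x ∈ Ioo rs r2, X' x = 0 := by
    intro x hx
    have hev : Z =ᶠ[nhds x] (fun _ => (0:ℝ)) := by
      filter_upwards [Icc_mem_nhds hx.1 hx.2] with s hs
      exact hZzero s hs
    have h0 : HasDerivAt Z 0 x := (hasDerivAt_const x (0:ℝ)).congr_of_eventuallyEq hev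
    have huniq := (hZat x hx).unique h0
    have hxI := Ioo_subset_Icc_self hx
    have h1 : 0 ≤ p x / d1 x * (lam / (4 * x ^ 2)) * X x ^ 2 := by
      have hx0 : 0 < x := lt_trans hrs hx.1
      have := hppos x; have := hd1 x hxI
      positivity
    have h2 : p x * X' x ^ 2 = 0 := by nlinarith [hppos x, sq_nonneg (X' x)]
    have h3 : X' x ^ 2 = 0 := by
      by_contra hc
      have h4 : 0 < X' x ^ 2 := lt_of_le_of_ne (sq_nonneg _) (Ne.symm hc)
      nlinarith [hppos x]
    exact pow_eq_zero_iff two_ne_zero |>.mp h3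
  have hmono : MonotoneOn X (Icc rs r2) := by
    apply monotoneOn_of_deriv_nonneg (convex_Icc rs r2) hX.continuousOn
    · intro x hx
      rw [interior_Icc] at hx
      exact ((hX'at x hx).differentiableAt).differentiableWithinAt
    · intro x hx
      rw [interior_Icc] at hx
      rw [(hX'at x hx).deriv, hX'zero x hx]
  have hanti : AntitoneOn X (Icc rs r2) := by
    apply antitoneOn_of_deriv_nonpos (convex_Icc rs r2) hX.continuousOn
    · intro x hx
      rw [interior_Icc] at hx
      exact ((hX'at x hx).differentiableAt).differentiableWithinAt
    · intro x hx
      rw [interior_Icc] at hx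
      rw [(hX'at x hx).deriv, hX'zero x hx]
  intro t ht
  have h1 : X rs ≤ X t := hmono hmem ht ht.1
  have h2 : X t ≤ X rs := hanti hmem ht ht.1
  linarith [hXrs.le, hXrs.ge]
end
end
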